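/- Let C, C₁, C₂, … be Archimedean copulas with (normalized, right-continuous at 0) generators φ, φ₁, φ₂, … such that (φ_n) converges pointwise to φ on (0,1]. Then for every x ∈ Cont(D⁺φ) and every y ∈ [f^0(x), 1] with C(x,y) ∈ Cont(D⁺φ) one has lim_{n→∞} K_{C_n}(x,[0,y]) = K_C(x,[0,y]); that is, lim_{n→∞} D⁺φ_n(x)/D⁺φ_n(C_n(x,y)) = D⁺φ(x)/D⁺φ(C(x,y)). Moreover, for every x ∈ (0,1) the set U_x = {y ∈ [f^0(x),1] : C(x,y) ∈ Cont(D⁺φ)} has full Lebesgue measure in, and is dense in, [f^0(x),1]. -/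

import Mathlib

open MeasureTheory Filter Set
open scoped ENNReal

noncomputable section

/-- Right-hand derivative (of a convex function on `[0,1]`) of `f` at `x`, realized as the
infimum of the forward difference quotients with right endpoint in `(x, 1]`. -/
noncomputable def rightD (f : ℝ → ℝ) (x : ℝ) : ℝ :=
  sInf ((fun y => (f y - f x) / (y - x)) '' Set.Ioc x 1)

/-- `φ : [0,1] → [0,∞]` is a (normalized, right-continuous at `0`) generator of an
Archimedean copula: convex, strictly decreasing, `φ 1 = 0`, finite on `(0,1]`,
right-continuous at `0` and normalized by `φ (1/2) = 1`. -/
structure IsGenerator (φ : ℝ → ℝ≥0∞) : Prop where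
  convex : ∀ x ∈ Set.Icc (0:ℝ) 1, ∀ y ∈ Set.Icc (0:ℝ) 1, ∀ t ∈ Set.Icc (0:ℝ) 1,
    φ (t * x + (1 - t) * y) ≤ ENNReal.ofReal t * φ x + ENNReal.ofReal (1 - t) * φ y
  strict_anti : ∀ x ∈ Set.Icc (0:ℝ) 1, ∀ y ∈ Set.Icc (0:ℝ) 1, x < y → φ y < φ x
  map_one : φ 1 = 0
  finite : ∀ x ∈ Set.Ioc (0:ℝ) 1, φ x < ⊤
  rightCont_zero : Filter.Tendsto φ (nhdsWithin 0 (Set.Ioi 0)) (nhds (φ 0))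
  normalized : φ (1/2) = 1

/-- Pseudo-inverse `φ⁻` of a generator: `φ⁻ s = φ⁻¹ s` for `s < φ 0` and `0` for `s ≥ φ 0`. -/
noncomputable def pseudoInv (φ : ℝ → ℝ≥0∞) (s : ℝ≥0∞) : ℝ :=
  sSup {x | x ∈ Set.Icc (0:ℝ) 1 ∧ s ≤ φ x}

/-- The Archimedean copula generated by `φ`: `C(x,y) = φ⁻(φ x + φ y)`. -/
noncomputable def archCopula (φ : ℝ → ℝ≥0∞) (x y : ℝ) : ℝ :=
  pseudoInv φ (φ x + φ y)

/-- The right-hand derivative `D⁺φ` of a generator. -/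
noncomputable def Dplus (φ : ℝ → ℝ≥0∞) (x : ℝ) : ℝ :=
  rightD (fun t => (φ t).toReal) x

/-- The set `Cont(D⁺φ)` of continuity points of `D⁺φ` in `(0,1)`. -/
def ContD (φ : ℝ → ℝ≥0∞) : Set ℝ :=
  {x | x ∈ Set.Ioo (0:ℝ) 1 ∧ ContinuousAt (Dplus φ) x}

/-- The `t`-level function `f^t(x) = φ⁻(φ t − φ x)` of the Archimedean copula generated
by `φ`. -/
noncomputable def levelFn (φ : ℝ → ℝ≥0∞) (t x : ℝ) : ℝ :=
  pseudoInv φ (φ t - φ x)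

/-- The Kendall distribution function `F^Kendall(x) = x − φ(x)/D⁺φ(x)` of the Archimedean
copula generated by `φ`. -/
noncomputable def kendall (φ : ℝ → ℝ≥0∞) (x : ℝ) : ℝ :=
  x - (φ x).toReal / Dplus φ x

/-- The Markov kernel (as conditional distribution function `(x,y) ↦ K_C(x,[0,y])`) of the
Archimedean copula generated by `φ`. -/
noncomputable def archKernel (φ : ℝ → ℝ≥0∞) (x y : ℝ) : ℝ :=
  if x = 0 ∨ x = 1 then 1
  else if y < levelFn φ 0 x then 0
  else Dplus φ x / Dplus φ (archCopula φ x y)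

/-- The metric `D₁` between two copulas, expressed via their conditional distribution
functions `K₁, K₂` (with `Kᵢ x y = K_{Cᵢ}(x,[0,y])`). -/
noncomputable def D1 (K1 K2 : ℝ → ℝ → ℝ) : ℝ :=
  ∫ y in Set.Icc (0:ℝ) 1, ∫ x in Set.Icc (0:ℝ) 1, |K1 x y - K2 x y|

/-- Conditional distribution function of the independence copula `Π`. -/
def piKernel : ℝ → ℝ → ℝ := fun _ y => y

/-- Dependence measure `ζ₁(C) = 3 D₁(C, Π)`. -/
noncomputable def zeta1 (K : ℝ → ℝ → ℝ) : ℝ := 3 * D1 K piKernel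

/-- Dependence measure `r(C) = 6 ∫∫ K_C(x,[0,y])² dλ(x) dλ(y) − 2`. -/
noncomputable def rdep (K : ℝ → ℝ → ℝ) : ℝ :=
  6 * (∫ y in Set.Icc (0:ℝ) 1, ∫ x in Set.Icc (0:ℝ) 1, (K x y) ^ 2) - 2

/-- Weak conditional convergence of a sequence of copulas, in terms of their conditional
distribution functions: for λ-a.e. `x ∈ [0,1]` the measures `K_{C_n}(x,·)` converge weakly
to `K_C(x,·)`, i.e. the conditional distribution functions converge at every continuity
point of `y ↦ K_C(x,[0,y])` in `[0,1]`. -/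
def WeakCondConv (Kseq : ℕ → ℝ → ℝ → ℝ) (K : ℝ → ℝ → ℝ) : Prop :=
  ∀ᵐ x ∂(volume.restrict (Set.Icc (0:ℝ) 1)),
    ∀ y ∈ Set.Icc (0:ℝ) 1, ContinuousWithinAt (fun t => K x t) (Set.Icc 0 1) y →
      Filter.Tendsto (fun n => Kseq n x y) Filter.atTop (nhds (K x y))

namespace Stmt9Aux

variable {φ : ℝ → ℝ≥0∞}

noncomputable def g (φ : ℝ → ℝ≥0∞) : ℝ → ℝ := fun t => (φ t).toReal

lemma ne_top (hφ : IsGenerator φ) {x : ℝ} (hx : 0 < x) (hx1 : x ≤ 1) : φ x ≠ ⊤ :=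
  (hφ.finite x ⟨hx, hx1⟩).ne

lemma anti (hφ : IsGenerator φ) {a b : ℝ} (ha : 0 ≤ a) (hab : a ≤ b) (hb : b ≤ 1) :
    φ b ≤ φ a := by
  rcases eq_or_lt_of_le hab with rfl | h
  · exact le_rfl
  · exact (hφ.strict_anti a ⟨ha, hab.trans hb⟩ b ⟨ha.trans hab, hb⟩ h).le

lemma strict_anti' (hφ : IsGenerator φ) {a b : ℝ} (ha : 0 ≤ a) (hab : a < b) (hb : b ≤ 1) :
    φ b < φ a := hφ.strict_anti a ⟨ha, hab.le.trans hb⟩ b ⟨ha.trans hab.le, hb⟩ hab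

lemma phi_pos (hφ : IsGenerator φ) {x : ℝ} (hx0 : 0 ≤ x) (hx : x < 1) : 0 < φ x := by
  have h := strict_anti' hφ hx0 hx le_rfl
  rwa [hφ.map_one] at h

lemma g_one (hφ : IsGenerator φ) : g φ 1 = 0 := by simp [g, hφ.map_one]

lemma g_pos (hφ : IsGenerator φ) {x : ℝ} (hx0 : 0 < x) (hx : x < 1) : 0 < g φ x :=
  ENNReal.toReal_pos (phi_pos hφ hx0.le hx).ne' (ne_top hφ hx0 hx.le)

lemma gen_convexOn (hφ : IsGenerator φ) : ConvexOn ℝ (Set.Ioc (0:ℝ) 1) (g φ) := by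
  refine ⟨convex_Ioc 0 1, ?_⟩
  intro x hx y hy a b ha hb hab
  have hx' : x ∈ Set.Icc (0:ℝ) 1 := Set.Ioc_subset_Icc_self hx
  have hy' : y ∈ Set.Icc (0:ℝ) 1 := Set.Ioc_subset_Icc_self hy
  have ha1 : a ≤ 1 := by linarith
  have hba : b = 1 - a := by linarith
  have key := hφ.convex x hx' y hy' a ⟨ha, ha1⟩
  rw [← hba] at key
  have hxt : φ x ≠ ⊤ := ne_top hφ hx.1 hx.2
  have hyt : φ y ≠ ⊤ := ne_top hφ hy.1 hy.2
  have hrt : ENNReal.ofReal a * φ x + ENNReal.ofReal b * φ y ≠ ⊤ :=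
    ENNReal.add_ne_top.2 ⟨ENNReal.mul_ne_top ENNReal.ofReal_ne_top hxt,
      ENNReal.mul_ne_top ENNReal.ofReal_ne_top hyt⟩
  have h2 := ENNReal.toReal_mono hrt key
  simp only [smul_eq_mul, g]
  calc (φ (a * x + b * y)).toReal
      ≤ (ENNReal.ofReal a * φ x + ENNReal.ofReal b * φ y).toReal := h2
    _ = a * (φ x).toReal + b * (φ y).toReal := by
        rw [ENNReal.toReal_add (ENNReal.mul_ne_top ENNReal.ofReal_ne_top hxt)
          (ENNReal.mul_ne_top ENNReal.ofReal_ne_top hyt), ENNReal.toReal_mul,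
          ENNReal.toReal_mul, ENNReal.toReal_ofReal ha, ENNReal.toReal_ofReal hb]

lemma slope_slope (hφ : IsGenerator φ) {w x y : ℝ} (hw : 0 < w) (hwx : w < x) (hxy : x < y)
    (hy : y ≤ 1) :
    (g φ x - g φ w) / (x - w) ≤ (g φ y - g φ x) / (y - x) :=
  (gen_convexOn hφ).slope_mono_adjacent ⟨hw, (hwx.trans hxy).le.trans hy⟩
    ⟨hw.trans (hwx.trans hxy), hy⟩ hwx hxy

lemma Dplus_eq (x : ℝ) : Dplus φ x = sInf ((fun y => (g φ y - g φ x) / (y - x)) '' Set.Ioc x 1) :=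
  rfl

lemma dplus_bdd (hφ : IsGenerator φ) {x : ℝ} (hx : x ∈ Set.Ioo (0:ℝ) 1) :
    BddBelow ((fun y => (g φ y - g φ x) / (y - x)) '' Set.Ioc x 1) := by
  refine ⟨(g φ x - g φ (x/2)) / (x - x/2), ?_⟩
  rintro _ ⟨y, hy, rfl⟩
  exact slope_slope hφ (by linarith [hx.1]) (by linarith [hx.1]) hy.1 hy.2

lemma dplus_ne (hx1 : x < 1) :
    ((fun y => (g φ y - g φ x) / (y - x)) '' Set.Ioc x 1).Nonempty :=
  ⟨_, ⟨1, ⟨hx1, le_rfl⟩, rfl⟩⟩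

lemma Dplus_le_slope (hφ : IsGenerator φ) {x y : ℝ} (hx : x ∈ Set.Ioo (0:ℝ) 1)
    (hy : y ∈ Set.Ioc x 1) : Dplus φ x ≤ (g φ y - g φ x) / (y - x) := by
  rw [Dplus_eq]; exact csInf_le (dplus_bdd hφ hx) ⟨y, hy, rfl⟩

lemma slope_le_Dplus (hφ : IsGenerator φ) {w x : ℝ} (hw : 0 < w) (hwx : w < x) (hx : x < 1) :
    (g φ x - g φ w) / (x - w) ≤ Dplus φ x := by
  rw [Dplus_eq]
  refine le_csInf (dplus_ne hx) ?_
  rintro _ ⟨y, hy, rfl⟩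
  exact slope_slope hφ hw hwx hy.1 hy.2

lemma Dplus_neg (hφ : IsGenerator φ) {x : ℝ} (hx : x ∈ Set.Ioo (0:ℝ) 1) : Dplus φ x < 0 := by
  refine lt_of_le_of_lt (Dplus_le_slope hφ hx ⟨hx.2, le_rfl⟩) ?_
  apply div_neg_of_neg_of_pos
  · rw [g_one hφ]; linarith [g_pos hφ hx.1 hx.2]
  · linarith [hx.2]

lemma Dplus_mono (hφ : IsGenerator φ) {x₁ x₂ : ℝ} (hx₁ : x₁ ∈ Set.Ioo (0:ℝ) 1)
    (hx₂ : x₂ ∈ Set.Ioo (0:ℝ) 1) (h : x₁ ≤ x₂) : Dplus φ x₁ ≤ Dplus φ x₂ := by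
  rcases eq_or_lt_of_le h with rfl | h
  · exact le_rfl
  rw [Dplus_eq (φ := φ) x₂]
  refine le_csInf (dplus_ne hx₂.2) ?_
  rintro _ ⟨y, hy, rfl⟩
  calc Dplus φ x₁ ≤ (g φ x₂ - g φ x₁) / (x₂ - x₁) :=
        Dplus_le_slope hφ hx₁ ⟨h, hx₂.2.le⟩
    _ ≤ (g φ y - g φ x₂) / (y - x₂) := slope_slope hφ hx₁.1 h hy.1 hy.2

lemma exists_slope_lt (hφ : IsGenerator φ) {x b : ℝ} (hx : x ∈ Set.Ioo (0:ℝ) 1)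
    (hb : Dplus φ x < b) : ∃ y ∈ Set.Ioc x 1, (g φ y - g φ x) / (y - x) < b := by
  rw [Dplus_eq] at hb
  obtain ⟨_, ⟨y, hy, rfl⟩, hlt⟩ := exists_lt_of_csInf_lt (dplus_ne hx.2) hb
  exact ⟨y, hy, hlt⟩



variable {φseq : ℕ → ℝ → ℝ≥0∞}

lemma tendsto_g (hφ : IsGenerator φ)
    (hconv : ∀ x ∈ Set.Ioc (0:ℝ) 1, Tendsto (fun n => φseq n x) atTop (nhds (φ x)))
    {u : ℝ} (hu : u ∈ Set.Ioc (0:ℝ) 1) :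
    Tendsto (fun n => g (φseq n) u) atTop (nhds (g φ u)) :=
  (ENNReal.tendsto_toReal (ne_top hφ hu.1 hu.2)).comp (hconv u hu)

lemma tendsto_slope (hφ : IsGenerator φ)
    (hconv : ∀ x ∈ Set.Ioc (0:ℝ) 1, Tendsto (fun n => φseq n x) atTop (nhds (φ x)))
    {u v : ℝ} (hu : u ∈ Set.Ioc (0:ℝ) 1) (hv : v ∈ Set.Ioc (0:ℝ) 1) :
    Tendsto (fun n => (g (φseq n) v - g (φseq n) u) / (v - u)) atTop
      (nhds ((g φ v - g φ u) / (v - u))) :=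
  ((tendsto_g hφ hconv hv).sub (tendsto_g hφ hconv hu)).div_const _

lemma key (hφ : IsGenerator φ) (hφseq : ∀ n, IsGenerator (φseq n))
    (hconv : ∀ x ∈ Set.Ioc (0:ℝ) 1, Tendsto (fun n => φseq n x) atTop (nhds (φ x)))
    {c : ℝ} (hc : c ∈ Set.Ioo (0:ℝ) 1) (hcont : ContinuousAt (Dplus φ) c)
    {t : ℕ → ℝ} (ht : Tendsto t atTop (nhds c)) (htm : ∀ᶠ n in atTop, t n ∈ Set.Ioo (0:ℝ) 1) :
    Tendsto (fun n => Dplus (φseq n) (t n)) atTop (nhds (Dplus φ c)) := by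
  rw [tendsto_order]
  constructor
  · intro b hb
    have h1 : ∀ᶠ z in nhds c, b < Dplus φ z ∧ z ∈ Set.Ioo (0:ℝ) 1 :=
      (hcont.eventually_const_lt hb).and (isOpen_Ioo.eventually_mem hc)
    have h2 : ∀ᶠ z in nhdsWithin c (Set.Iio c), b < Dplus φ z ∧ z ∈ Set.Ioo (0:ℝ) 1 :=
      h1.filter_mono nhdsWithin_le_nhds
    obtain ⟨a, ⟨hba, ha⟩, hac⟩ := (h2.and self_mem_nhdsWithin).exists
    have hac' : a < c := hac
    set u := (a + c)/2 with hu
    have hau : a < u := by rw [hu]; linarith [hac']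
    have huc : u < c := by rw [hu]; linarith [hac']
    have hu0 : 0 < u := lt_trans ha.1 hau
    have hu1 : u < 1 := huc.trans hc.2
    have hslope : b < (g φ u - g φ a) / (u - a) :=
      lt_of_lt_of_le hba (Dplus_le_slope hφ ha ⟨hau, hu1.le⟩)
    have hsl := (tendsto_slope hφ hconv ⟨ha.1, ha.2.le⟩ ⟨hu0, hu1.le⟩).eventually_const_lt hslope
    filter_upwards [hsl, ht.eventually_const_lt huc, htm] with n h₁ h₂ h₃
    calc b < (g (φseq n) u - g (φseq n) a) / (u - a) := h₁
      _ ≤ Dplus (φseq n) u := slope_le_Dplus (hφseq n) ha.1 hau hu1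
      _ ≤ Dplus (φseq n) (t n) := Dplus_mono (hφseq n) ⟨hu0, hu1⟩ h₃ h₂.le
  · intro b hb
    have h1 : ∀ᶠ z in nhds c, Dplus φ z < b ∧ z ∈ Set.Ioo (0:ℝ) 1 :=
      (hcont.eventually_lt_const hb).and (isOpen_Ioo.eventually_mem hc)
    have h2 : ∀ᶠ z in nhdsWithin c (Set.Ioi c), Dplus φ z < b ∧ z ∈ Set.Ioo (0:ℝ) 1 :=
      h1.filter_mono nhdsWithin_le_nhds
    obtain ⟨β, ⟨hβb, hβ⟩, hcβ⟩ := (h2.and self_mem_nhdsWithin).exists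
    have hcβ' : c < β := hcβ
    obtain ⟨v, hv, hvb⟩ := exists_slope_lt hφ hβ hβb
    have hsl := (tendsto_slope hφ hconv ⟨hβ.1, hβ.2.le⟩
      ⟨hβ.1.trans hv.1, hv.2⟩).eventually_lt_const hvb
    filter_upwards [hsl, ht.eventually_lt_const hcβ', htm] with n h₁ h₂ h₃
    calc Dplus (φseq n) (t n) ≤ Dplus (φseq n) β := Dplus_mono (hφseq n) h₃ hβ h₂.le
      _ ≤ (g (φseq n) v - g (φseq n) β) / (v - β) := Dplus_le_slope (hφseq n) hβ hv
      _ < b := h₁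


section PseudoInv

variable {s : ℝ≥0∞} {x y z b : ℝ}

lemma pseudoInv_nonneg : 0 ≤ pseudoInv φ s :=
  Real.sSup_nonneg (fun z hz => hz.1.1)

lemma pseudoInv_le (h : ∀ z, z ∈ Set.Icc (0:ℝ) 1 → s ≤ φ z → z ≤ b) (hb : 0 ≤ b) :
    pseudoInv φ s ≤ b :=
  Real.sSup_le (fun z hz => h z hz.1 hz.2) hb

lemma pseudoInv_le_one : pseudoInv φ s ≤ 1 :=
  pseudoInv_le (fun _ hz _ => hz.2) zero_le_one

lemma le_pseudoInv (hz : z ∈ Set.Icc (0:ℝ) 1) (h : s ≤ φ z) : z ≤ pseudoInv φ s :=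
  le_csSup ⟨1, fun _ hw => hw.1.2⟩ ⟨hz, h⟩

lemma mem_A_of_lt (hφ : IsGenerator φ) (hz0 : 0 ≤ z) (hz : z < pseudoInv φ s) :
    z ∈ Set.Icc (0:ℝ) 1 ∧ s ≤ φ z := by
  have hne : {x | x ∈ Set.Icc (0:ℝ) 1 ∧ s ≤ φ x}.Nonempty := by
    by_contra h
    rw [Set.not_nonempty_iff_eq_empty] at h
    rw [pseudoInv, h, Real.sSup_empty] at hz
    exact absurd hz (not_lt.2 hz0)
  obtain ⟨w, hw, hzw⟩ := exists_lt_of_lt_csSup hne hz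
  have hz1 : z ≤ 1 := hzw.le.trans hw.1.2
  exact ⟨⟨hz0, hz1⟩, hw.2.trans (anti hφ hz0 hzw.le hw.1.2)⟩

lemma pseudoInv_lt_imp (hφ : IsGenerator φ) (hz : z ∈ Set.Icc (0:ℝ) 1)
    (h : pseudoInv φ s < z) : φ z < s := by
  by_contra hc
  exact absurd (le_pseudoInv hz (not_lt.1 hc)) (not_le.2 h)

lemma archCopula_nonneg : 0 ≤ archCopula φ x y := pseudoInv_nonneg

lemma archCopula_le_left (hφ : IsGenerator φ) (hx : x ∈ Set.Ioo (0:ℝ) 1) :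
    archCopula φ x y ≤ x := by
  refine pseudoInv_le (fun z hz h => ?_) hx.1.le
  by_contra hzx
  push_neg at hzx
  have h1 : φ z < φ x := strict_anti' hφ hx.1.le hzx hz.2
  have h2 : φ x ≤ φ z := le_trans le_self_add h
  exact absurd h2 (not_le.2 h1)

lemma archCopula_zero_right (hφ : IsGenerator φ) (hx : x ∈ Set.Ioo (0:ℝ) 1) :
    archCopula φ x 0 = 0 := by
  refine le_antisymm (pseudoInv_le (fun z hz h => ?_) le_rfl) archCopula_nonneg
  by_contra hz0
  push_neg at hz0
  have h1 : φ z < φ 0 := strict_anti' hφ le_rfl hz0 hz.2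
  have h2 : φ 0 ≤ φ z := le_trans le_add_self h
  exact absurd h2 (not_le.2 h1)

lemma lt_level_imp (hφ : IsGenerator φ) (hx : x ∈ Set.Ioo (0:ℝ) 1) (hy0 : 0 ≤ y)
    (hy : y < levelFn φ 0 x) : archCopula φ x y ≤ 0 := by
  obtain ⟨hyIcc, hsy⟩ := mem_A_of_lt hφ hy0 hy
  have h0 : φ 0 ≤ φ x + φ y := tsub_le_iff_left.1 hsy
  refine pseudoInv_le (fun z hz h => ?_) le_rfl
  by_contra hz0
  push_neg at hz0
  have h1 : φ z < φ 0 := strict_anti' hφ le_rfl hz0 hz.2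
  exact absurd (h0.trans h) (not_le.2 h1)

lemma g_contOn (hφ : IsGenerator φ) : ContinuousOn (g φ) (Set.Ioo (0:ℝ) 1) :=
  ((gen_convexOn hφ).subset Set.Ioo_subset_Ioc_self (convex_Ioo 0 1)).continuousOn isOpen_Ioo

lemma phi_eq_at (hφ : IsGenerator φ) {s : ℝ≥0∞} (hc : pseudoInv φ s ∈ Set.Ioo (0:ℝ) 1) :
    φ (pseudoInv φ s) = s := by
  set c := pseudoInv φ s with hcdef
  have hgc : ContinuousAt (g φ) c := (g_contOn hφ).continuousAt (isOpen_Ioo.mem_nhds hc)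
  have hmemhalf := mem_A_of_lt hφ (by linarith [hc.1] : (0:ℝ) ≤ c/2)
    (by linarith [hc.1] : c/2 < c)
  have hs_ne : s ≠ ⊤ := by
    intro hs
    exact ne_top hφ (by linarith [hc.1]) (by linarith [hc.2] : c/2 ≤ 1)
      (top_le_iff.1 (hs ▸ hmemhalf.2))
  have hφc_ne : φ c ≠ ⊤ := ne_top hφ hc.1 hc.2.le
  -- lower: s ≤ φ c
  have hle1 : s ≤ φ c := by
    have hev : ∀ᶠ z in nhdsWithin c (Set.Iio c), s.toReal ≤ g φ z := by
      have hIoo : Set.Ioo (0:ℝ) c ∈ nhdsWithin c (Set.Iio c) := by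
        rw [mem_nhdsWithin_iff_exists_mem_nhds_inter]
        exact ⟨Set.Ioi 0, Ioi_mem_nhds hc.1, fun z hz => ⟨hz.1, hz.2⟩⟩
      filter_upwards [hIoo] with z hz
      have hm := mem_A_of_lt hφ hz.1.le hz.2
      exact ENNReal.toReal_le_toReal hs_ne (ne_top hφ hz.1 hm.1.2) |>.2 hm.2
    have htends : Tendsto (g φ) (nhdsWithin c (Set.Iio c)) (nhds (g φ c)) :=
      hgc.continuousWithinAt.tendsto
    have := ge_of_tendsto htends hev
    calc s = ENNReal.ofReal s.toReal := (ENNReal.ofReal_toReal hs_ne).symm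
      _ ≤ ENNReal.ofReal (g φ c) := ENNReal.ofReal_le_ofReal this
      _ = φ c := ENNReal.ofReal_toReal hφc_ne
  -- upper: φ c ≤ s
  have hle2 : φ c ≤ s := by
    have hev : ∀ᶠ z in nhdsWithin c (Set.Ioi c), g φ z ≤ s.toReal := by
      have hIoo : Set.Ioo c 1 ∈ nhdsWithin c (Set.Ioi c) := by
        rw [mem_nhdsWithin_iff_exists_mem_nhds_inter]
        exact ⟨Set.Iio 1, Iio_mem_nhds hc.2, fun z hz => ⟨hz.2, hz.1⟩⟩
      filter_upwards [hIoo] with z hz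
      have hm : φ z < s := pseudoInv_lt_imp hφ ⟨(hc.1.trans hz.1).le, hz.2.le⟩ hz.1
      exact ENNReal.toReal_le_toReal (hm.trans_le le_top).ne hs_ne |>.2 hm.le
    have htends : Tendsto (g φ) (nhdsWithin c (Set.Ioi c)) (nhds (g φ c)) :=
      hgc.continuousWithinAt.tendsto
    have := le_of_tendsto htends hev
    calc φ c = ENNReal.ofReal (g φ c) := (ENNReal.ofReal_toReal hφc_ne).symm
      _ ≤ ENNReal.ofReal s.toReal := ENNReal.ofReal_le_ofReal this
      _ = s := ENNReal.ofReal_toReal hs_ne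
  exact le_antisymm hle2 hle1

end PseudoInv


section Arch

variable {φseq : ℕ → ℝ → ℝ≥0∞} {x y : ℝ}

lemma y_pos (hφ : IsGenerator φ) (hx : x ∈ Set.Ioo (0:ℝ) 1) (hy0 : 0 ≤ y)
    (hc : archCopula φ x y ∈ Set.Ioo (0:ℝ) 1) : 0 < y := by
  rcases eq_or_lt_of_le hy0 with rfl | h
  · rw [archCopula_zero_right hφ hx] at hc
    exact absurd hc.1 (lt_irrefl 0)
  · exact h

lemma tendsto_arch (hφ : IsGenerator φ) (hφseq : ∀ n, IsGenerator (φseq n))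
    (hconv : ∀ x ∈ Set.Ioc (0:ℝ) 1, Tendsto (fun n => φseq n x) atTop (nhds (φ x)))
    (hx : x ∈ Set.Ioc (0:ℝ) 1) (hy : y ∈ Set.Ioc (0:ℝ) 1)
    (hc : archCopula φ x y ∈ Set.Ioo (0:ℝ) 1) :
    Tendsto (fun n => archCopula (φseq n) x y) atTop (nhds (archCopula φ x y)) := by
  set c := archCopula φ x y with hcdef
  have hphic : φ c = φ x + φ y := phi_eq_at hφ hc
  have hs_ne : φ x + φ y ≠ ⊤ := hphic ▸ ne_top hφ hc.1 hc.2.le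
  have hsn : Tendsto (fun n => φseq n x + φseq n y) atTop (nhds (φ x + φ y)) :=
    (hconv x hx).add (hconv y hy)
  rw [tendsto_order]
  constructor
  · intro b hb
    rcases lt_or_ge b 0 with hb0 | hb0
    · exact Eventually.of_forall fun n => hb0.trans_le archCopula_nonneg
    · set z := (b + c)/2 with hz
      have hbz : b < z := by rw [hz]; linarith
      have hzc : z < c := by rw [hz]; linarith
      have hz0 : 0 < z := lt_of_le_of_lt hb0 hbz |>.trans_le le_rfl
      have hz1 : z ≤ 1 := (hzc.trans hc.2).le
      set z' := (z + c)/2 with hz'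
      have hzz' : z < z' := by rw [hz']; linarith
      have hz'c : z' < c := by rw [hz']; linarith
      have hmem := mem_A_of_lt hφ (hz0.trans hzz').le hz'c
      have hslt : φ x + φ y < φ z :=
        lt_of_le_of_lt hmem.2 (strict_anti' hφ hz0.le hzz' (hz'c.trans hc.2).le)
      have hev := Filter.Tendsto.eventually_lt hsn (hconv z ⟨hz0, hz1⟩) hslt
      filter_upwards [hev] with n hn
      exact lt_of_lt_of_le hbz (le_pseudoInv ⟨hz0.le, hz1⟩ hn.le)
  · intro b hb
    rcases le_or_gt b 1 with hb1 | hb1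
    · set z := (c + b)/2 with hz
      have hcz : c < z := by rw [hz]; linarith
      have hzb : z < b := by rw [hz]; linarith
      have hz0 : 0 < z := hc.1.trans hcz
      have hz1 : z ≤ 1 := hzb.le.trans hb1
      have hφz : φ z < φ x + φ y := pseudoInv_lt_imp hφ ⟨hz0.le, hz1⟩ hcz
      have hev := Filter.Tendsto.eventually_lt (hconv z ⟨hz0, hz1⟩) hsn hφz
      filter_upwards [hev] with n hn
      refine lt_of_le_of_lt (pseudoInv_le (fun w hw hsw => ?_) hz0.le) hzb
      by_contra hwz
      push_neg at hwz
      have : φseq n w ≤ φseq n z := anti (hφseq n) hz0.le hwz.le hw.2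
      exact absurd (hsw.trans this) (not_le.2 hn)
    · filter_upwards with n
      exact lt_of_le_of_lt pseudoInv_le_one hb1

lemma not_lt_level_of_pos (hφ : IsGenerator φ) (hx : x ∈ Set.Ioo (0:ℝ) 1) (hy0 : 0 ≤ y)
    (hpos : 0 < archCopula φ x y) : ¬ y < levelFn φ 0 x := by
  intro h
  exact absurd hpos (not_lt.2 (lt_level_imp hφ hx hy0 h))

lemma arch_pos_of_level_lt (hφ : IsGenerator φ) (hx : x ∈ Set.Ioo (0:ℝ) 1)
    (hy : y ∈ Set.Ioc (levelFn φ 0 x) 1) : 0 < archCopula φ x y := by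
  have hy0 : 0 ≤ y := pseudoInv_nonneg.trans hy.1.le
  have hφy : φ y < φ 0 - φ x :=
    pseudoInv_lt_imp hφ ⟨hy0, hy.2⟩ hy.1
  have hxt : φ x ≠ ⊤ := ne_top hφ hx.1 hx.2.le
  have hs : φ x + φ y < φ 0 := by
    calc φ x + φ y < φ x + (φ 0 - φ x) := ENNReal.add_lt_add_left hxt hφy
      _ = φ 0 := add_tsub_cancel_of_le (anti hφ le_rfl hx.1.le hx.2.le)
  have hev : ∀ᶠ z in nhdsWithin 0 (Set.Ioi 0), φ x + φ y < φ z ∧ z ∈ Set.Ioo (0:ℝ) 1 := by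
    refine (hφ.rightCont_zero.eventually_const_lt hs).and ?_
    have h1 : ∀ᶠ z in nhdsWithin (0:ℝ) (Set.Ioi 0), z ∈ Set.Ioi (0:ℝ) :=
      eventually_mem_nhdsWithin
    have h2 : ∀ᶠ z in nhdsWithin (0:ℝ) (Set.Ioi 0), z < 1 :=
      eventually_nhdsWithin_of_eventually_nhds (eventually_lt_nhds zero_lt_one)
    filter_upwards [h1, h2] with z hz1 hz2
    exact ⟨hz1, hz2⟩
  obtain ⟨z, hsz, hz⟩ := hev.exists
  exact lt_of_lt_of_le hz.1 (le_pseudoInv ⟨hz.1.le, hz.2.le⟩ hsz.le)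

end Arch


section Main

variable {φseq : ℕ → ℝ → ℝ≥0∞} {x y : ℝ}

lemma part1 (hφ : IsGenerator φ) (hφseq : ∀ n, IsGenerator (φseq n))
    (hconv : ∀ x ∈ Set.Ioc (0:ℝ) 1, Tendsto (fun n => φseq n x) atTop (nhds (φ x)))
    (hx : x ∈ ContD φ) (hy : y ∈ Set.Icc (levelFn φ 0 x) 1) (hc : archCopula φ x y ∈ ContD φ) :
    Tendsto (fun n => archKernel (φseq n) x y) atTop (nhds (archKernel φ x y)) ∧
    Tendsto (fun n => Dplus (φseq n) x / Dplus (φseq n) (archCopula (φseq n) x y)) atTop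
      (nhds (Dplus φ x / Dplus φ (archCopula φ x y))) := by
  obtain ⟨hxIoo, hxCont⟩ := hx
  obtain ⟨hcIoo, hcCont⟩ := hc
  have hy0 : 0 ≤ y := pseudoInv_nonneg.trans hy.1
  have hypos : 0 < y := y_pos hφ hxIoo hy0 hcIoo
  have htc : Tendsto (fun n => archCopula (φseq n) x y) atTop (nhds (archCopula φ x y)) :=
    tendsto_arch hφ hφseq hconv ⟨hxIoo.1, hxIoo.2.le⟩ ⟨hypos, hy.2⟩ hcIoo
  have hden := key hφ hφseq hconv hcIoo hcCont htc
    (htc.eventually (isOpen_Ioo.eventually_mem hcIoo))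
  have hnum := key hφ hφseq hconv hxIoo hxCont tendsto_const_nhds
    (Eventually.of_forall fun _ => hxIoo)
  have hratio := hnum.div hden (Dplus_neg hφ hcIoo).ne
  refine ⟨?_, hratio⟩
  have hne : ¬ (x = 0 ∨ x = 1) := by
    rintro (rfl | rfl)
    · exact lt_irrefl _ hxIoo.1
    · exact lt_irrefl _ hxIoo.2
  have hK : archKernel φ x y = Dplus φ x / Dplus φ (archCopula φ x y) := by
    rw [archKernel, if_neg hne, if_neg (not_lt.2 hy.1)]
  have hev : (fun n => Dplus (φseq n) x / Dplus (φseq n) (archCopula (φseq n) x y))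
      =ᶠ[atTop] (fun n => archKernel (φseq n) x y) := by
    filter_upwards [htc.eventually_const_lt hcIoo.1] with n hn
    rw [archKernel, if_neg hne, if_neg (not_lt_level_of_pos (hφseq n) hxIoo hy0 hn)]
  rw [hK]
  exact hratio.congr' hev

lemma contD_compl_countable (hφ : IsGenerator φ) :
    {t | t ∈ Set.Ioo (0:ℝ) 1 ∧ ¬ ContinuousAt (Dplus φ) t}.Countable := by
  have hclamp : ∀ k : ℕ, ∀ z : ℝ,
      max (1/(k+3):ℝ) (min z (1 - 1/(k+3))) ∈ Set.Ioo (0:ℝ) 1 := by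
    intro k z
    have he0 : (0:ℝ) < 1/(k+3) := by positivity
    have he1 : (1:ℝ)/(k+3) ≤ 1/3 := by
      apply div_le_div_of_nonneg_left (by norm_num) (by norm_num)
      have hk := Nat.cast_nonneg (α := ℝ) k
      linarith
    constructor
    · exact lt_of_lt_of_le he0 (le_max_left _ _)
    · have hb : max (1/(k+3):ℝ) (min z (1 - 1/(k+3))) ≤ 1 - 1/(k+3) :=
        max_le (by linarith) (min_le_right _ _)
      linarith
  have hFk : ∀ k : ℕ, Monotone (fun t => Dplus φ (max (1/(k+3):ℝ) (min t (1 - 1/(k+3))))) := by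
    intro k s t hst
    exact Dplus_mono hφ (hclamp k s) (hclamp k t)
      (max_le_max le_rfl (min_le_min hst le_rfl))
  refine Set.Countable.mono ?_
    (Set.countable_iUnion (fun k : ℕ => (hFk k).countable_not_continuousAt))
  rintro t ⟨htIoo, htnc⟩
  have hδ : (0:ℝ) < min t (1 - t) := lt_min htIoo.1 (by linarith [htIoo.2])
  obtain ⟨n, hn⟩ := exists_nat_one_div_lt hδ
  have hle : (1:ℝ)/(n+3) ≤ 1/(n+1) := by
    apply div_le_div_of_nonneg_left (by norm_num) (by positivity)
    push_cast; linarith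
  have he : (1:ℝ)/(n+3) < min t (1 - t) := lt_of_le_of_lt hle hn
  refine Set.mem_iUnion.2 ⟨n, ?_⟩
  intro hcont
  apply htnc
  have hmem : Set.Ioo ((1:ℝ)/(n+3)) (1 - 1/(n+3)) ∈ nhds t := by
    refine Ioo_mem_nhds ?_ ?_
    · exact lt_of_lt_of_le he (min_le_left _ _)
    · have := lt_of_lt_of_le he (min_le_right _ _); linarith
  have hev : (fun z => Dplus φ (max (1/(n+3):ℝ) (min z (1 - 1/(n+3))))) =ᶠ[nhds t] Dplus φ := by
    filter_upwards [hmem] with z hz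
    rw [min_eq_left hz.2.le, max_eq_right hz.1.le]
  exact hcont.congr hev

lemma level_lt_one (hφ : IsGenerator φ) (hx : x ∈ Set.Ioo (0:ℝ) 1) :
    levelFn φ 0 x < 1 := by
  have hs0 : 0 < φ 0 - φ x := tsub_pos_of_lt (strict_anti' hφ le_rfl hx.1 hx.2.le)
  set r : ℝ≥0∞ := min ((φ 0 - φ x)/2) (1/2) with hr
  have hr0 : 0 < r := lt_min (ENNReal.half_pos hs0.ne') (by norm_num)
  have hrtop : r ≠ ⊤ := ((min_le_right _ _).trans_lt (by norm_num)).ne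
  have hrs : r < φ 0 - φ x := by
    rcases eq_or_ne (φ 0 - φ x) ⊤ with h | h
    · rw [h]; exact hrtop.lt_top
    · exact (min_le_left _ _).trans_lt (ENNReal.half_lt_self hs0.ne' h)
  set t : ℝ := r.toReal with htdef
  have ht0 : 0 < t := ENNReal.toReal_pos hr0.ne' hrtop
  have ht2 : t ≤ 1/2 := by
    have h := ENNReal.toReal_mono (by norm_num) (min_le_right ((φ 0 - φ x)/2) (1/2))
    rw [← htdef] at h
    norm_num at h
    linarith
  have hcvx := hφ.convex (1/2) (by norm_num) 1 (by norm_num) t ⟨ht0.le, by linarith⟩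
  simp only [hφ.map_one, hφ.normalized, mul_zero, add_zero, mul_one] at hcvx
  rw [ENNReal.ofReal_toReal hrtop] at hcvx
  set z0 : ℝ := t * (1/2) + (1 - t) with hz0
  have hz0lt : z0 < 1 := by rw [hz0]; nlinarith
  have hz0ge : (0:ℝ) ≤ z0 := by rw [hz0]; nlinarith
  refine lt_of_le_of_lt (pseudoInv_le (fun z hz h => ?_) hz0ge) hz0lt
  by_contra hzz
  push_neg at hzz
  have h1 : φ z ≤ φ z0 := anti hφ hz0ge hzz.le hz.2
  exact absurd h (not_le.2 (lt_of_le_of_lt (h1.trans hcvx) hrs))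

lemma part2 (hφ : IsGenerator φ) (hx : x ∈ Set.Ioo (0:ℝ) 1) :
    volume {y | y ∈ Set.Icc (levelFn φ 0 x) 1 ∧ archCopula φ x y ∈ ContD φ} =
        volume (Set.Icc (levelFn φ 0 x) 1) ∧
      Set.Icc (levelFn φ 0 x) 1 ⊆
        closure {y | y ∈ Set.Icc (levelFn φ 0 x) 1 ∧ archCopula φ x y ∈ ContD φ} := by
  set a := levelFn φ 0 x with ha
  have ha0 : 0 ≤ a := pseudoInv_nonneg
  have ha1 : a < 1 := level_lt_one hφ hx
  set B := {t | t ∈ Set.Ioo (0:ℝ) 1 ∧ ¬ ContinuousAt (Dplus φ) t} with hB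
  have hBc : B.Countable := contD_compl_countable hφ
  set U := {y | y ∈ Set.Icc a 1 ∧ archCopula φ x y ∈ ContD φ} with hU
  set T := {y | y ∈ Set.Ioc a 1 ∧ archCopula φ x y ∈ B} with hT
  have hsub : ∀ y ∈ Set.Icc a 1, y ∉ U → y ∈ {a} ∪ T := by
    intro y hy hyU
    rcases eq_or_lt_of_le hy.1 with heq | hay
    · exact Or.inl heq.symm
    right
    have hyIoc : y ∈ Set.Ioc a 1 := ⟨hay, hy.2⟩
    have hcIoo : archCopula φ x y ∈ Set.Ioo (0:ℝ) 1 :=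
      ⟨arch_pos_of_level_lt hφ hx hyIoc, lt_of_le_of_lt (archCopula_le_left hφ hx) hx.2⟩
    exact ⟨hyIoc, hcIoo, fun hcont => hyU ⟨hy, hcIoo, hcont⟩⟩
  have hinj : Set.InjOn (fun y => archCopula φ x y) T := by
    have hkey : ∀ y₁ y₂, y₁ ∈ T → y₂ ∈ T → y₁ < y₂ →
        archCopula φ x y₁ ≠ archCopula φ x y₂ := by
      intro y₁ y₂ h₁ h₂ hlt heq
      have hy₁0 : 0 < y₁ := lt_of_le_of_lt ha0 h₁.1.1
      have hanti : φ y₂ < φ y₁ := strict_anti' hφ hy₁0.le hlt h₂.1.2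
      have hxt : φ x ≠ ⊤ := ne_top hφ hx.1 hx.2.le
      have hslt : φ x + φ y₂ < φ x + φ y₁ := ENNReal.add_lt_add_left hxt hanti
      have he₁ : φ (archCopula φ x y₁) = φ x + φ y₁ := phi_eq_at hφ h₁.2.1
      have he₂ : φ (archCopula φ x y₂) = φ x + φ y₂ := phi_eq_at hφ h₂.2.1
      rw [heq, he₂] at he₁
      exact absurd he₁ (ne_of_lt hslt)
    intro y₁ h₁ y₂ h₂ heq
    have heq' : archCopula φ x y₁ = archCopula φ x y₂ := heq
    rcases lt_trichotomy y₁ y₂ with h | h | h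
    · exact absurd heq' (hkey _ _ h₁ h₂ h)
    · exact h
    · exact absurd heq'.symm (hkey _ _ h₂ h₁ h)
  have hTc : T.Countable :=
    Set.MapsTo.countable_of_injOn (fun y hy => hy.2) hinj hBc
  have hNc : ({a} ∪ T : Set ℝ).Countable := (Set.countable_singleton a).union hTc
  have hN0 : volume ({a} ∪ T : Set ℝ) = 0 := hNc.measure_zero _
  constructor
  · refine le_antisymm (measure_mono (fun y hy => hy.1)) ?_
    calc volume (Set.Icc a 1) ≤ volume (U ∪ ({a} ∪ T)) := by
          refine measure_mono (fun y hy => ?_)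
          by_cases h : y ∈ U
          exacts [Or.inl h, Or.inr (hsub y hy h)]
      _ ≤ volume U + volume ({a} ∪ T) := measure_union_le _ _
      _ = volume U := by rw [hN0, add_zero]
  · intro t ht
    rw [Metric.mem_closure_iff]
    intro ε hε
    set l := max a (t - ε/2) with hl
    set r := min 1 (t + ε/2) with hrdef
    have hlr : l < r := by
      rw [hl, hrdef]
      simp only [max_lt_iff, lt_min_iff]
      refine ⟨⟨ha1, ?_⟩, ?_, ?_⟩ <;> linarith [ht.1, ht.2]
    have hKsub : Set.Ioo l r ⊆ Set.Icc a 1 := fun z hz =>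
      ⟨(le_max_left _ _).trans hz.1.le, hz.2.le.trans (min_le_left _ _)⟩
    have hnotsub : ¬ Set.Ioo l r ⊆ ({a} ∪ T) := by
      intro h
      have h0 : volume (Set.Ioo l r) = 0 :=
        le_antisymm ((measure_mono h).trans hN0.le) zero_le
      rw [Real.volume_Ioo] at h0
      exact absurd h0 (ENNReal.ofReal_pos.2 (sub_pos.2 hlr)).ne'
    obtain ⟨u, hu, huN⟩ := Set.not_subset.1 hnotsub
    have huU : u ∈ U := by
      by_contra h
      exact huN (hsub u (hKsub hu) h)
    refine ⟨u, huU, ?_⟩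
    rw [Real.dist_eq, abs_sub_lt_iff]
    have h1 : t - ε/2 ≤ l := le_max_right _ _
    have h2 : r ≤ t + ε/2 := min_le_right _ _
    constructor <;> linarith [hu.1, hu.2]

end Main

end Stmt9Aux

/-- For Archimedean copulas whose generators converge pointwise on
`(0,1]`: for every `x ∈ Cont(D⁺φ)` and every `y ∈ [f⁰(x),1]` with `C(x,y) ∈ Cont(D⁺φ)` the
Markov kernels converge, `K_{C_n}(x,[0,y]) → K_C(x,[0,y])`, that is,
`D⁺φ_n(x)/D⁺φ_n(C_n(x,y)) → D⁺φ(x)/D⁺φ(C(x,y))`; moreover for every `x ∈ (0,1)` the set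
`U_x = {y ∈ [f⁰(x),1] : C(x,y) ∈ Cont(D⁺φ)}` has full Lebesgue measure in, and is dense
in, `[f⁰(x),1]`. -/
theorem stmt9 (φ : ℝ → ℝ≥0∞) (φseq : ℕ → ℝ → ℝ≥0∞)
    (hφ : IsGenerator φ) (hφseq : ∀ n, IsGenerator (φseq n))
    (hconv : ∀ x ∈ Set.Ioc (0:ℝ) 1,
      Filter.Tendsto (fun n => φseq n x) Filter.atTop (nhds (φ x))) :
    (∀ x ∈ ContD φ, ∀ y ∈ Set.Icc (levelFn φ 0 x) 1, archCopula φ x y ∈ ContD φ →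
      Filter.Tendsto (fun n => archKernel (φseq n) x y) Filter.atTop
          (nhds (archKernel φ x y)) ∧
        Filter.Tendsto
          (fun n => Dplus (φseq n) x / Dplus (φseq n) (archCopula (φseq n) x y))
          Filter.atTop (nhds (Dplus φ x / Dplus φ (archCopula φ x y)))) ∧
    (∀ x ∈ Set.Ioo (0:ℝ) 1,
      volume {y | y ∈ Set.Icc (levelFn φ 0 x) 1 ∧ archCopula φ x y ∈ ContD φ} =
          volume (Set.Icc (levelFn φ 0 x) 1) ∧
        Set.Icc (levelFn φ 0 x) 1 ⊆
          closure {y | y ∈ Set.Icc (levelFn φ 0 x) 1 ∧ archCopula φ x y ∈ ContD φ}) := by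
  constructor
  · intro x hx y hy hc
    exact Stmt9Aux.part1 hφ hφseq hconv hx hy hc
  · intro x hx
    exact Stmt9Aux.part2 hφ hx
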